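/- Let n, m ≥ 1, let K be a polyhedral cone of ℚⁿ, and let f₁, …, f_m : K → ℚ be piecewise linear maps. Then the set {(λ₁,…,λ_m) ∈ ℤᵐ | λᵢ ≥ 0 for all i, and λ₁f₁(x) + ⋯ + λ_m f_m(x) ≥ 0 for all x ∈ K} is a finitely generated additive submonoid of ℤᵐ. -/

import Mathlib

/-- A *convex polyhedral cone* of `ℚⁿ`: a finite intersection of closed half-spaces
`{x | p(x) ≥ 0}` for nonzero linear functionals `p`. -/
def IsConvexPolyhedralCone (n : ℕ) (K : Set (Fin n → ℚ)) : Prop :=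
  ∃ (m : ℕ) (p : Fin m → ((Fin n → ℚ) →ₗ[ℚ] ℚ)), (∀ i, p i ≠ 0) ∧
    K = {x : Fin n → ℚ | ∀ i, 0 ≤ p i x}

/-- A *polyhedral cone* of `ℚⁿ`: a finite union of convex polyhedral cones. -/
def IsPolyhedralCone (n : ℕ) (K : Set (Fin n → ℚ)) : Prop :=
  ∃ (N : ℕ) (C : Fin N → Set (Fin n → ℚ)), (∀ l, IsConvexPolyhedralCone n (C l)) ∧
    K = ⋃ l, C l

/-- A map `f` is *piecewise linear* on a polyhedral cone `K` if `K` decomposes as a finite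
union of convex polyhedral cones on each of which `f` agrees with a linear functional. -/
def IsPiecewiseLinearOn (n : ℕ) (K : Set (Fin n → ℚ)) (f : (Fin n → ℚ) → ℚ) : Prop :=
  ∃ (N : ℕ) (C : Fin N → Set (Fin n → ℚ)), (∀ l, IsConvexPolyhedralCone n (C l)) ∧
    K = ⋃ l, C l ∧ ∀ l, ∃ g : (Fin n → ℚ) →ₗ[ℚ] ℚ, ∀ x ∈ C l, f x = g x

open Finset Submodule

/-- The halfspace `{x | 0 ≤ p x}` as a pointed cone (submodule over nonneg rationals). -/
def halfCone {n : ℕ} (p : (Fin n → ℚ) →ₗ[ℚ] ℚ) : Submodule {c : ℚ // 0 ≤ c} (Fin n → ℚ) where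
  carrier := {x | 0 ≤ p x}
  add_mem' := by intro a b ha hb; simpa using add_nonneg ha hb
  zero_mem' := by simp
  smul_mem' := by
    intro c x hx
    show (0:ℚ) ≤ p (c • x)
    rw [show c • x = (c : ℚ) • x from rfl, map_smul, smul_eq_mul]
    exact mul_nonneg c.2 hx

lemma mem_halfCone {n : ℕ} (p : (Fin n → ℚ) →ₗ[ℚ] ℚ) (x : Fin n → ℚ) :
    x ∈ halfCone p ↔ 0 ≤ p x := Iff.rfl

/-- Minkowski–Weyl, one direction: a finite intersection of halfspaces is a finitely
generated cone. -/
lemma mw {n : ℕ} (P : Finset ((Fin n → ℚ) →ₗ[ℚ] ℚ)) :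
    ∃ G : Finset (Fin n → ℚ),
      {x : Fin n → ℚ | ∀ q ∈ P, 0 ≤ q x}
        = (Submodule.span {c : ℚ // 0 ≤ c} (G : Set (Fin n → ℚ)) : Set (Fin n → ℚ)) := by
  classical
  induction P using Finset.induction_on with
  | empty =>
      refine ⟨(Finset.univ.image fun i : Fin n => Pi.single i (1:ℚ)) ∪
              (Finset.univ.image fun i : Fin n => Pi.single i (-1:ℚ)), ?_⟩
      apply Set.eq_of_subset_of_subset
      · intro x _
        have hx : x = ∑ i : Fin n, Pi.single i (x i) := (Finset.univ_sum_single x).symm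
        rw [hx]
        refine sum_mem fun i _ => ?_
        rcases le_or_gt 0 (x i) with h | h
        · have : (Pi.single i (x i) : Fin n → ℚ) = (⟨x i, h⟩ : {c : ℚ // 0 ≤ c}) • (Pi.single i (1:ℚ) : Fin n → ℚ) := by
            rw [Nonneg.mk_smul, ← Pi.single_smul, smul_eq_mul, mul_one]
          rw [this]
          exact Submodule.smul_mem _ _ (subset_span (by simp [Finset.mem_union]))
        · have : (Pi.single i (x i) : Fin n → ℚ) = (⟨-x i, by linarith⟩ : {c : ℚ // 0 ≤ c}) • (Pi.single i (-1:ℚ) : Fin n → ℚ) := by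
            rw [Nonneg.mk_smul, ← Pi.single_smul, smul_eq_mul]
            ring_nf
          rw [this]
          exact Submodule.smul_mem _ _ (subset_span (by simp [Finset.mem_union]))
      · intro x _
        simp
  | @insert p P hp ih =>
      obtain ⟨G, hG⟩ := ih
      set Pp := G.filter (fun v => 0 ≤ p v) with hPpdef
      set Nn := G.filter (fun v => ¬ 0 ≤ p v) with hNndef
      set W := Pp ∪ (Pp ×ˢ Nn).image
          (fun rs : (Fin n → ℚ) × (Fin n → ℚ) =>
            p rs.1 • rs.2 + (-(p rs.2)) • rs.1) with hWdef
      refine ⟨W, ?_⟩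
      have hWsub : Submodule.span {c : ℚ // 0 ≤ c} (W : Set (Fin n → ℚ))
          ≤ halfCone p ⊓ Submodule.span {c : ℚ // 0 ≤ c} (G : Set (Fin n → ℚ)) := by
        rw [Submodule.span_le]
        intro w hw
        rw [Finset.coe_union, Set.mem_union] at hw
        rcases hw with hw | hw
        · rw [Finset.mem_coe, Finset.mem_filter] at hw
          exact ⟨hw.2, subset_span hw.1⟩
        · rw [Finset.mem_coe, Finset.mem_image] at hw
          obtain ⟨⟨r, s⟩, hrs, rfl⟩ := hw
          rw [Finset.mem_product] at hrs
          obtain ⟨hr, hs⟩ := hrs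
          rw [Finset.mem_filter] at hr hs
          have hpr : 0 ≤ p r := hr.2
          have hps : p s < 0 := lt_of_not_ge hs.2
          constructor
          · show (0:ℚ) ≤ p _
            rw [map_add, map_smul, map_smul, smul_eq_mul, smul_eq_mul]
            nlinarith
          · have h1 : (p r) • s = (⟨p r, hpr⟩ : {c : ℚ // 0 ≤ c}) • s := rfl
            have h2 : (-(p s)) • r = (⟨-(p s), by linarith⟩ : {c : ℚ // 0 ≤ c}) • r := rfl
            rw [h1, h2]
            exact add_mem (Submodule.smul_mem _ _ (subset_span hs.1))
              (Submodule.smul_mem _ _ (subset_span hr.1))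
      apply Set.eq_of_subset_of_subset
      · -- hard direction
        intro x hx
        have hpx : (0:ℚ) ≤ p x := hx p (Finset.mem_insert_self _ _)
        have hxG : x ∈ Submodule.span {c : ℚ // 0 ≤ c} (G : Set (Fin n → ℚ)) := by
          have : x ∈ {x : Fin n → ℚ | ∀ q ∈ P, 0 ≤ q x} :=
            fun q hq => hx q (Finset.mem_insert_of_mem hq)
          rwa [hG] at this
        obtain ⟨f, hf⟩ := mem_span_finset.mp hxG
        set c : (Fin n → ℚ) → ℚ := fun v => (f v : ℚ) with hcdef
        have hc : ∀ v, 0 ≤ c v := fun v => (f v).2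
        have hfc : ∀ v, f v • v = c v • v := fun v => rfl
        set u : Fin n → ℚ := ∑ v ∈ Pp, c v • v with hudef
        set y : Fin n → ℚ := ∑ v ∈ Nn, c v • v with hydef
        set A : ℚ := ∑ v ∈ Pp, c v * p v with hAdef
        set B : ℚ := ∑ v ∈ Nn, c v * (-(p v)) with hBdef
        have hxuy : x = u + y := by
          rw [← hf.2, hudef, hydef]
          rw [Finset.sum_congr rfl (fun v _ => hfc v)]
          exact (Finset.sum_filter_add_sum_filter_not G (fun v => 0 ≤ p v) _).symm
        have hpu : p u = A := by
          rw [hudef, map_sum, hAdef]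
          exact Finset.sum_congr rfl fun v _ => by rw [map_smul, smul_eq_mul]
        have hpy : p y = -B := by
          rw [hydef, map_sum, hBdef, ← Finset.sum_neg_distrib]
          exact Finset.sum_congr rfl fun v _ => by rw [map_smul, smul_eq_mul]; ring
        have hpxAB : p x = A - B := by
          rw [hxuy, map_add, hpu, hpy]; ring
        have hB0 : 0 ≤ B := by
          rw [hBdef]
          refine Finset.sum_nonneg fun v hv => ?_
          rw [hNndef, Finset.mem_filter] at hv
          have := lt_of_not_ge hv.2
          have := hc v
          nlinarith
        have huW : ∀ v ∈ Pp, v ∈ W := fun v hv => Finset.mem_union_left _ hv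
        rcases eq_or_lt_of_le hB0 with hB | hB
        · -- B = 0 : all negative-part coefficients vanish
          have hzero : ∀ v ∈ Nn, c v = 0 := by
            intro v hv
            have hall := (Finset.sum_eq_zero_iff_of_nonneg (fun w hw => by
              rw [hNndef, Finset.mem_filter] at hw
              have := lt_of_not_ge hw.2
              have := hc w
              nlinarith)).mp hB.symm v hv
            rw [hNndef, Finset.mem_filter] at hv
            have hvneg := lt_of_not_ge hv.2
            by_contra hne
            have : 0 < c v := lt_of_le_of_ne (hc v) (Ne.symm hne)
            nlinarith
          have hy0 : y = 0 := by
            rw [hydef]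
            exact Finset.sum_eq_zero fun v hv => by rw [hzero v hv, zero_smul]
          rw [hxuy, hy0, add_zero, hudef]
          refine sum_mem fun v hv => ?_
          rw [← hfc v]
          exact Submodule.smul_mem _ _ (subset_span (huW v hv))
        · -- 0 < B, hence 0 < A
          have hA : 0 < A := by rw [hpxAB] at hpx; linarith
          have key : (∑ r ∈ Pp, (c r * p x) • r)
              + ∑ r ∈ Pp, ∑ s ∈ Nn, (c r * c s) • ((p r) • s + (-(p s)) • r)
              = A • x := by
            have inner : ∀ r ∈ Pp, ∑ s ∈ Nn, (c r * c s) • ((p r) • s + (-(p s)) • r)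
                = (c r * p r) • y + (c r * B) • r := by
              intro r _
              have step : ∀ s ∈ Nn, (c r * c s) • ((p r) • s + (-(p s)) • r)
                  = (c r * p r) • (c s • s) + (c s * (-(p s))) • (c r • r) := by
                intro s _
                match_scalars <;> ring
              rw [Finset.sum_congr rfl step, Finset.sum_add_distrib, ← Finset.smul_sum,
                ← Finset.sum_smul, ← hydef, ← hBdef, smul_smul, mul_comm B (c r)]
            rw [Finset.sum_congr rfl inner, Finset.sum_add_distrib, ← Finset.sum_smul, ← hAdef]
            have combine : (∑ r ∈ Pp, (c r * p x) • r) + ∑ r ∈ Pp, (c r * B) • r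
                = A • u := by
              rw [← Finset.sum_add_distrib, hudef, Finset.smul_sum]
              refine Finset.sum_congr rfl fun r _ => ?_
              have : p x = A - B := hpxAB
              match_scalars
              rw [this]; ring
            rw [add_comm (A • y), ← add_assoc, combine, ← smul_add, ← hxuy]
          have hmem : A • x ∈ Submodule.span {c : ℚ // 0 ≤ c} (W : Set (Fin n → ℚ)) := by
            rw [← key]
            refine add_mem (sum_mem fun r hr => ?_) (sum_mem fun r hr => sum_mem fun s hs => ?_)
            · have : (c r * p x) • r
                  = (⟨c r * p x, mul_nonneg (hc r) hpx⟩ : {c : ℚ // 0 ≤ c}) • r := rfl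
              rw [this]
              exact Submodule.smul_mem _ _ (subset_span (huW r hr))
            · have : (c r * c s) • ((p r) • s + (-(p s)) • r)
                  = (⟨c r * c s, mul_nonneg (hc r) (hc s)⟩ : {c : ℚ // 0 ≤ c})
                    • ((p r) • s + (-(p s)) • r) := rfl
              rw [this]
              refine Submodule.smul_mem _ _ (subset_span ?_)
              refine Finset.mem_union_right _ (Finset.mem_image.mpr ⟨(r, s), ?_, rfl⟩)
              exact Finset.mem_product.mpr ⟨hr, hs⟩
          have hxsm : x = (⟨A⁻¹, by positivity⟩ : {c : ℚ // 0 ≤ c}) • (A • x) := by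
            show x = A⁻¹ • A • x
            rw [smul_smul, inv_mul_cancel₀ (ne_of_gt hA), one_smul]
          rw [hxsm]
          exact Submodule.smul_mem _ _ hmem
      · intro x hx
        have hx' := hWsub hx
        intro q hq
        rcases Finset.mem_insert.mp hq with rfl | hq
        · exact hx'.1
        · have : x ∈ {x : Fin n → ℚ | ∀ q ∈ P, 0 ≤ q x} := by rw [hG]; exact hx'.2
          exact this q hq

open Finset

/-- Gordan's lemma, integer-coefficient version. -/
lemma gordan_int (m : ℕ) (Bc : Finset (Fin m → ℤ)) :
    ∃ P : AddSubmonoid (Fin m → ℤ), P.FG ∧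
      (P : Set (Fin m → ℤ))
        = {l : Fin m → ℤ | (∀ i, 0 ≤ l i) ∧ ∀ b ∈ Bc, 0 ≤ ∑ i, b i * l i} := by
  classical
  set T : Set (Fin m → ℤ) :=
    {l : Fin m → ℤ | (∀ i, 0 ≤ l i) ∧ ∀ b ∈ Bc, 0 ≤ ∑ i, b i * l i} with hTdef
  set r : (Fin m → ℤ) → (Fin m → ℤ) → Prop :=
    fun u v => (∀ i, u i ≤ v i) ∧ ∀ b ∈ Bc, (∑ i, b i * u i) ≤ ∑ i, b i * v i with hrdef
  have hsubT : ∀ u v, u ∈ T → v ∈ T → r u v → v - u ∈ T := by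
    intro u v hu hv huv
    constructor
    · intro i
      simp only [Pi.sub_apply]
      have := huv.1 i
      omega
    · intro b hb
      have h1 := huv.2 b hb
      have : (∑ i, b i * (v - u) i) = (∑ i, b i * v i) - ∑ i, b i * u i := by
        rw [← Finset.sum_sub_distrib]
        exact Finset.sum_congr rfl fun i _ => by simp [mul_sub]
      rw [this]
      omega
  have hpwo : ∀ f : ℕ → (Fin m → ℤ), (∀ k, f k ∈ T) →
      ∃ a b : ℕ, a < b ∧ r (f a) (f b) := by
    intro f hfT
    set e : (Fin m → ℤ) → ((Fin m ⊕ {b // b ∈ Bc}) → ℕ) :=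
      fun u => Sum.elim (fun i => (u i).toNat) (fun b => (∑ i, b.1 i * u i).toNat) with hedef
    have hPWO : (Set.univ : Set ((Fin m ⊕ {b // b ∈ Bc}) → ℕ)).IsPWO :=
      Set.isPWO_of_wellQuasiOrderedLE _
    obtain ⟨a, b, hab, hle⟩ := hPWO.exists_lt (f := fun k => e (f k)) (fun _ => Set.mem_univ _)
    refine ⟨a, b, hab, ?_, ?_⟩
    · intro i
      have h := hle (Sum.inl i)
      simp only [hedef, Sum.elim_inl] at h
      have h1 := (hfT a).1 i
      have h2 := (hfT b).1 i
      omega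
    · intro q hq
      have h := hle (Sum.inr ⟨q, hq⟩)
      simp only [hedef, Sum.elim_inr] at h
      have h1 := (hfT a).2 q hq
      have h2 := (hfT b).2 q hq
      omega
  set M : Set (Fin m → ℤ) :=
    {v | v ∈ T ∧ v ≠ 0 ∧ ∀ w ∈ T, w ≠ 0 → r w v → w = v} with hMdef
  have hMfin : M.Finite := by
    by_contra hinf
    have hinf' : M.Infinite := hinf
    set emb := hinf'.natEmbedding with hembdef
    obtain ⟨a, b, hab, hr⟩ := hpwo (fun k => (emb k : Fin m → ℤ))
      (fun k => (emb k).2.1)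
    have heq : (emb a : Fin m → ℤ) = (emb b : Fin m → ℤ) :=
      (emb b).2.2.2 _ (emb a).2.1 (emb a).2.2.1 hr
    exact (Nat.ne_of_lt hab) (emb.injective (Subtype.ext heq))
  set P : AddSubmonoid (Fin m → ℤ) :=
    { carrier := T
      zero_mem' := by
        constructor
        · intro i; simp
        · intro b hb; simp
      add_mem' := by
        intro a b ha hb
        constructor
        · intro i
          have := ha.1 i; have := hb.1 i
          simp only [Pi.add_apply]; omega
        · intro q hq
          have h1 := ha.2 q hq; have h2 := hb.2 q hq
          have : (∑ i, q i * (a + b) i) = (∑ i, q i * a i) + ∑ i, q i * b i := by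
            rw [← Finset.sum_add_distrib]
            exact Finset.sum_congr rfl fun i _ => by simp [mul_add]
          rw [this]; omega } with hPdef
  have hgen : ∀ N : ℕ, ∀ u ∈ T, (∑ i, u i).toNat ≤ N →
      u ∈ AddSubmonoid.closure M := by
    intro N
    induction N using Nat.strong_induction_on with
    | _ N ih =>
      intro u huT hN
      by_cases hu0 : u = 0
      · rw [hu0]; exact zero_mem _
      by_cases humin : u ∈ M
      · exact AddSubmonoid.subset_closure humin
      · have : ¬ ∀ w ∈ T, w ≠ 0 → r w u → w = u := by
          intro hcon
          exact humin ⟨huT, hu0, hcon⟩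
        push_neg at this
        obtain ⟨w, hwT, hw0, hrwu, hwu⟩ := this
        -- sum bookkeeping
        have hwle : ∀ i, w i ≤ u i := hrwu.1
        have hwpos : ∀ i, 0 ≤ w i := hwT.1
        have hupos : ∀ i, 0 ≤ u i := huT.1
        have hsw : 0 < ∑ i, w i := by
          obtain ⟨i, hi⟩ := Function.ne_iff.mp hw0
          have h1 : 0 < w i := lt_of_le_of_ne (hwpos i) (Ne.symm hi)
          have h2 : w i ≤ ∑ j, w j :=
            Finset.single_le_sum (fun j _ => hwpos j) (Finset.mem_univ i)
          omega
        have hswsu : (∑ i, w i) < ∑ i, u i := by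
          obtain ⟨i, hi⟩ := Function.ne_iff.mp hwu
          have h1 : w i < u i := lt_of_le_of_ne (hwle i) hi
          have := Finset.sum_lt_sum (fun j _ => hwle j) ⟨i, Finset.mem_univ i, h1⟩
          exact this
        have hsum_sub : (∑ i, (u - w) i) = (∑ i, u i) - ∑ i, w i := by
          rw [← Finset.sum_sub_distrib]
          exact Finset.sum_congr rfl fun i _ => rfl
        have hsu0 : 0 ≤ ∑ i, u i := Finset.sum_nonneg fun i _ => hupos i
        have hw_cl : w ∈ AddSubmonoid.closure M := by
          refine ih (∑ i, w i).toNat (by omega) w hwT (le_refl _)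
        have huw_cl : u - w ∈ AddSubmonoid.closure M := by
          refine ih (∑ i, (u - w) i).toNat (by rw [hsum_sub]; omega) (u - w)
            (hsubT w u hwT huT hrwu) (le_refl _)
        have : u = w + (u - w) := by ring
        rw [this]
        exact add_mem hw_cl huw_cl
  refine ⟨P, ⟨hMfin.toFinset, ?_⟩, rfl⟩
  apply le_antisymm
  · rw [AddSubmonoid.closure_le]
    intro v hv
    rw [Set.Finite.coe_toFinset] at hv
    exact hv.1
  · intro u huT
    have := hgen (∑ i, u i).toNat u huT (le_refl _)
    rwa [Set.Finite.coe_toFinset]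

lemma rat2int (m : ℕ) (a : Fin m → ℚ) :
    ∃ b : Fin m → ℤ, ∀ lam : Fin m → ℤ,
      (0 ≤ ∑ i, a i * (lam i : ℚ)) ↔ 0 ≤ ∑ i, b i * lam i := by
  classical
  set d : ℕ := ∏ j, (a j).den with hd
  have hdpos : 0 < d := Finset.prod_pos fun j _ => (a j).pos
  have he : ∀ i : Fin m, ∃ e : ℕ, e * (a i).den = d := by
    intro i
    have hdvd : (a i).den ∣ d := Finset.dvd_prod_of_mem _ (Finset.mem_univ i)
    exact ⟨d / (a i).den, Nat.div_mul_cancel hdvd⟩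
  choose e hei using he
  have hcast : ∀ i, ((e i : ℚ)) * ((a i).num : ℚ) = (d : ℚ) * a i := by
    intro i
    have h1 : (e i : ℚ) * ((a i).den : ℚ) = (d : ℚ) := by exact_mod_cast hei i
    have h2 : ((a i).num : ℚ) = a i * ((a i).den : ℚ) := by
      have hden : ((a i).den : ℚ) ≠ 0 := by
        exact_mod_cast (a i).den_nz
      exact ((eq_div_iff hden).mp (Rat.num_div_den (a i)).symm).symm
    rw [h2, ← h1]; ring
  refine ⟨fun i => (e i : ℤ) * (a i).num, fun lam => ?_⟩
  have hsum : ((∑ i, ((e i : ℤ) * (a i).num) * lam i : ℤ) : ℚ)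
      = (d:ℚ) * ∑ i, a i * (lam i : ℚ) := by
    push_cast
    rw [Finset.mul_sum]
    refine Finset.sum_congr rfl fun i _ => ?_
    linear_combination (lam i : ℚ) * hcast i
  constructor
  · intro h
    have h' : (0:ℚ) ≤ (d:ℚ) * ∑ i, a i * (lam i : ℚ) :=
      mul_nonneg (by positivity) h
    rw [← hsum] at h'
    exact_mod_cast h'
  · intro h
    have h' : (0:ℚ) ≤ ((∑ i, ((e i : ℤ) * (a i).num) * lam i : ℤ) : ℚ) := by
      exact_mod_cast h
    rw [hsum] at h'
    have hd' : (0:ℚ) < (d:ℚ) := by exact_mod_cast hdpos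
    nlinarith [h', hd']

/-- Let `n, m ≥ 1`, let `K` be a polyhedral cone of `ℚⁿ`, and let
`f₁, …, f_m : K → ℚ` be piecewise linear.  Then
`{(λ₁,…,λ_m) ∈ ℤᵐ | λᵢ ≥ 0 for all i, and λ₁f₁(x) + ⋯ + λ_m f_m(x) ≥ 0 for all x ∈ K}`
is a finitely generated additive submonoid of `ℤᵐ`. -/
theorem pl_solution_monoid_fg
    (n m : ℕ) (hn : 1 ≤ n) (hm : 1 ≤ m) (K : Set (Fin n → ℚ)) (hK : IsPolyhedralCone n K)
    (f : Fin m → ((Fin n → ℚ) → ℚ)) (hf : ∀ i, IsPiecewiseLinearOn n K (f i)) :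
    ∃ P : AddSubmonoid (Fin m → ℤ), P.FG ∧
      (P : Set (Fin m → ℤ))
        = {lam : Fin m → ℤ | (∀ i, 0 ≤ lam i) ∧
            ∀ x ∈ K, 0 ≤ ∑ i, (lam i : ℚ) * f i x} := by
  classical
  choose N C hCconv hKdec hglin using hf
  choose g hg using hglin
  choose k p hpne hCeq using fun i l => (hCconv i l : ∃ k q, _ ∧ _)
  set L := (∀ i : Fin m, Fin (N i)) with hLdef
  set D : L → Set (Fin n → ℚ) := fun l => ⋂ i, C i (l i) with hDdef
  have hDC : ∀ (l : L) (x : Fin n → ℚ), x ∈ D l ↔ ∀ i, x ∈ C i (l i) := by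
    intro l x; exact Set.mem_iInter
  have i0 : Fin m := ⟨0, hm⟩
  have hDK : ∀ l : L, D l ⊆ K := by
    intro l x hx
    rw [hKdec i0]
    exact Set.mem_iUnion.mpr ⟨l i0, (hDC l x).mp hx i0⟩
  have hKD : ∀ x ∈ K, ∃ l : L, x ∈ D l := by
    intro x hx
    have hxl : ∀ i : Fin m, ∃ li : Fin (N i), x ∈ C i li := by
      intro i
      have := hx
      rw [hKdec i] at this
      exact Set.mem_iUnion.mp this
    choose l hl using hxl
    exact ⟨l, (hDC l x).mpr hl⟩
  -- express each piece through a finset of functionals, then apply mw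
  set Q : L → Finset ((Fin n → ℚ) →ₗ[ℚ] ℚ) := fun l =>
    Finset.univ.image (fun q : Σ i : Fin m, Fin (k i (l i)) => p q.1 (l q.1) q.2) with hQdef
  have hDQ : ∀ l : L, D l = {x : Fin n → ℚ | ∀ q ∈ Q l, 0 ≤ q x} := by
    intro l
    ext x
    rw [hDC l x]
    constructor
    · intro h q hq
      rw [hQdef, Finset.mem_image] at hq
      obtain ⟨⟨i, j⟩, _, rfl⟩ := hq
      have := h i
      rw [hCeq i (l i)] at this
      exact this j
    · intro h i
      rw [hCeq i (l i)]
      intro j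
      exact h _ (Finset.mem_image.mpr ⟨⟨i, j⟩, Finset.mem_univ _, rfl⟩)
  choose G hG using fun l : L => mw (Q l)
  have hDspan : ∀ l : L,
      D l = (Submodule.span {c : ℚ // 0 ≤ c} ((G l : Set (Fin n → ℚ)))
        : Set (Fin n → ℚ)) := by
    intro l; rw [hDQ l, hG l]
  -- the finite family of rational constraint vectors
  set A : Finset (Fin m → ℚ) :=
    Finset.univ.biUnion (fun l : L => (G l).image (fun v => fun i => g i (l i) v)) with hAdef
  have hSdesc : {lam : Fin m → ℤ | (∀ i, 0 ≤ lam i) ∧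
        ∀ x ∈ K, 0 ≤ ∑ i, (lam i : ℚ) * f i x}
      = {lam : Fin m → ℤ | (∀ i, 0 ≤ lam i) ∧
        ∀ a ∈ A, 0 ≤ ∑ i, a i * (lam i : ℚ)} := by
    ext lam
    simp only [Set.mem_setOf_eq]
    refine and_congr_right fun _ => ?_
    constructor
    · intro h a ha
      rw [hAdef, Finset.mem_biUnion] at ha
      obtain ⟨l, -, ha⟩ := ha
      rw [Finset.mem_image] at ha
      obtain ⟨v, hv, rfl⟩ := ha
      have hvD : v ∈ D l := by
        rw [hDspan l]
        exact Submodule.subset_span hv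
      have hvK : v ∈ K := hDK l hvD
      have : (∑ i, g i (l i) v * (lam i : ℚ)) = ∑ i, (lam i : ℚ) * f i v := by
        refine Finset.sum_congr rfl fun i _ => ?_
        rw [hg i (l i) v ((hDC l v).mp hvD i), mul_comm]
      rw [this]
      exact h v hvK
    · intro h x hx
      obtain ⟨l, hxD⟩ := hKD x hx
      set hlin : (Fin n → ℚ) →ₗ[ℚ] ℚ := ∑ i, (lam i : ℚ) • g i (l i) with hlindef
      have hlin_apply : ∀ z, hlin z = ∑ i, (lam i : ℚ) * g i (l i) z := by
        intro z
        rw [hlindef, LinearMap.sum_apply]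
        exact Finset.sum_congr rfl fun i _ => by
          rw [LinearMap.smul_apply, smul_eq_mul]
      have hgoal : (∑ i, (lam i : ℚ) * f i x) = hlin x := by
        rw [hlin_apply]
        refine Finset.sum_congr rfl fun i _ => ?_
        rw [hg i (l i) x ((hDC l x).mp hxD i)]
      rw [hgoal]
      have hxspan : x ∈ Submodule.span {c : ℚ // 0 ≤ c} ((G l : Set (Fin n → ℚ))) := by
        have := hxD; rwa [hDspan l] at this
      obtain ⟨t, ht⟩ := mem_span_finset.mp hxspan
      have hxsum : x = ∑ v ∈ G l, (t v : ℚ) • v := by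
        rw [← ht.2]; rfl
      rw [hxsum, map_sum]
      refine Finset.sum_nonneg fun v hv => ?_
      rw [map_smul, smul_eq_mul]
      refine mul_nonneg (t v).2 ?_
      have hmem : (fun i => g i (l i) v) ∈ A := by
        rw [hAdef, Finset.mem_biUnion]
        exact ⟨l, Finset.mem_univ _, Finset.mem_image.mpr ⟨v, hv, rfl⟩⟩
      have := h _ hmem
      rw [hlin_apply]
      calc (0:ℚ) ≤ ∑ i, g i (l i) v * (lam i : ℚ) := this
        _ = ∑ i, (lam i : ℚ) * g i (l i) v :=
            Finset.sum_congr rfl fun i _ => mul_comm _ _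
  -- clear denominators
  choose b hb using fun a : Fin m → ℚ => rat2int m a
  set Bc : Finset (Fin m → ℤ) := A.image b with hBcdef
  have hSdesc2 : {lam : Fin m → ℤ | (∀ i, 0 ≤ lam i) ∧
        ∀ a ∈ A, 0 ≤ ∑ i, a i * (lam i : ℚ)}
      = {l : Fin m → ℤ | (∀ i, 0 ≤ l i) ∧ ∀ q ∈ Bc, 0 ≤ ∑ i, q i * l i} := by
    ext lam
    simp only [Set.mem_setOf_eq]
    refine and_congr_right fun _ => ?_
    constructor
    · intro h q hq
      rw [hBcdef, Finset.mem_image] at hq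
      obtain ⟨a, ha, rfl⟩ := hq
      exact (hb a lam).mp (h a ha)
    · intro h a ha
      refine (hb a lam).mpr (h (b a) ?_)
      rw [hBcdef]
      exact Finset.mem_image.mpr ⟨a, ha, rfl⟩
  obtain ⟨P, hPFG, hPset⟩ := gordan_int m Bc
  exact ⟨P, hPFG, by rw [hPset, ← hSdesc2, ← hSdesc]⟩
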